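/- Let G be a graph that has a perfect matching, and let w be an integer weight function on its edges such that every nice cycle of G has nonzero circulation c_w(C) ≠ 0. Then the minimum w-weight perfect matching of G is unique; that is, w is isolating for G. -/

import Mathlib

section PM
variable {V : Type*}

noncomputable def pmOther (M : Finset (Sym2 V))
    (hM : ∀ v : V, ∃! e, e ∈ M ∧ v ∈ e) (v : V) : V :=
  Sym2.Mem.other ((hM v).exists.choose_spec).2

theorem pmOther_spec (M : Finset (Sym2 V)) (hM : ∀ v : V, ∃! e, e ∈ M ∧ v ∈ e) (v : V) :
    s(v, pmOther M hM v) ∈ M := by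
  rw [pmOther, Sym2.other_spec]
  exact ((hM v).exists.choose_spec).1

theorem pm_edge_eq (M : Finset (Sym2 V)) (hM : ∀ v : V, ∃! e, e ∈ M ∧ v ∈ e) {v : V}
    {e : Sym2 V} (he : e ∈ M) (hv : v ∈ e) : e = s(v, pmOther M hM v) :=
  (hM v).unique ⟨he, hv⟩ ⟨pmOther_spec M hM v, Sym2.mem_mk_left _ _⟩

theorem pmOther_unique (M : Finset (Sym2 V)) (hM : ∀ v : V, ∃! e, e ∈ M ∧ v ∈ e) {v u : V}
    (h : s(v, u) ∈ M) : u = pmOther M hM v :=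
  Sym2.congr_right.mp (pm_edge_eq M hM h (Sym2.mem_mk_left _ _))

theorem pmOther_invol (M : Finset (Sym2 V)) (hM : ∀ v : V, ∃! e, e ∈ M ∧ v ∈ e) (v : V) :
    pmOther M hM (pmOther M hM v) = v :=
  (pmOther_unique M hM (by rw [Sym2.eq_swap]; exact pmOther_spec M hM v)).symm

end PM


/-- `M` is a perfect matching of the graph `G`: every edge of `M` is an edge of `G`,
and every vertex lies in exactly one edge of `M`. -/
def IsPerfectMatching {V : Type*} (G : SimpleGraph V) (M : Finset (Sym2 V)) : Prop :=
  (∀ e ∈ M, e ∈ G.edgeSet) ∧ ∀ v : V, ∃! e, e ∈ M ∧ v ∈ e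

/-- The weight of a matching is the sum of the weights of its edges. -/
def matchWeight {V : Type*} (w : Sym2 V → ℤ) (M : Finset (Sym2 V)) : ℤ := ∑ e ∈ M, w e

/-- The alternating sum `a₁ - a₂ + a₃ - ⋯` of a list. -/
def altSum : List ℤ → ℤ
  | [] => 0
  | a :: l => a - altSum l

theorem altSum_concat (l : List ℤ) (a : ℤ) :
    altSum (l ++ [a]) = altSum l + (-1) ^ l.length * a := by
  induction l with
  | nil => simp [altSum]
  | cons b t ih =>
    have h : altSum (b :: (t ++ [a])) = b - altSum (t ++ [a]) := rfl
    have h2 : altSum (b :: t) = b - altSum t := rfl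
    rw [List.cons_append, h, ih, List.length_cons, pow_succ, h2]
    ring

theorem altSum_range (g : ℕ → ℤ) (n : ℕ) :
    altSum ((List.range n).map g) = ∑ i ∈ Finset.range n, (-1) ^ i * g i := by
  induction n with
  | zero => simp [altSum]
  | succ n ih =>
    rw [List.range_succ, List.map_append, List.map_singleton, altSum_concat,
      Finset.sum_range_succ, ih, List.length_map, List.length_range]

/-- The circulation of a cycle (given by the list of its edges in cyclic order):
the absolute value of the alternating sum of the edge weights. -/
def circulation {V : Type*} (w : Sym2 V → ℤ) (l : List (Sym2 V)) : ℤ :=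
  |altSum (l.map w)|

/-- The closed walk `c` is a nice cycle of `G`: deleting its vertices from `G`
leaves a graph that still has a perfect matching. -/
def IsNiceCycle {V : Type*} (G : SimpleGraph V) {v : V} (c : G.Walk v v) : Prop :=
  ∃ M : Finset (Sym2 V), (∀ e ∈ M, e ∈ G.edgeSet) ∧
    (∀ e ∈ M, ∀ u, u ∈ e → u ∉ c.support) ∧
    (∀ u : V, u ∉ c.support → ∃! e, e ∈ M ∧ u ∈ e)

/-- If `G` has a perfect matching and `w` is a weight function giving nonzero circulation
to every nice cycle of `G`, then the minimum weight perfect matching is unique, i.e.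
`w` is isolating for `G`. -/
theorem isolating_of_nice_cycles_nonzero_circulation {V : Type*} [Fintype V] [DecidableEq V]
    (G : SimpleGraph V) (w : Sym2 V → ℤ)
    (hpm : ∃ M, IsPerfectMatching G M)
    (hcirc : ∀ (v : V) (c : G.Walk v v), c.IsCycle → IsNiceCycle G c →
      circulation w c.edges ≠ 0) :
    ∀ M₁ M₂ : Finset (Sym2 V), IsPerfectMatching G M₁ → IsPerfectMatching G M₂ →
      (∀ M, IsPerfectMatching G M → matchWeight w M₁ ≤ matchWeight w M) →
      (∀ M, IsPerfectMatching G M → matchWeight w M₂ ≤ matchWeight w M) →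
      M₁ = M₂ := by
  classical
  intro M₁ M₂ hM₁ hM₂ hmin₁ hmin₂
  by_contra hne
  set g₁ := pmOther M₁ hM₁.2 with hg₁def
  set g₂ := pmOther M₂ hM₂.2 with hg₂def
  -- find a vertex where the two matchings differ
  have hv₀ : ∃ v : V, g₁ v ≠ g₂ v := by
    by_contra h
    push_neg at h
    have key : ∀ (N N' : Finset (Sym2 V)) (hN : ∀ v : V, ∃! e, e ∈ N ∧ v ∈ e)
        (hN' : ∀ v : V, ∃! e, e ∈ N' ∧ v ∈ e),
        (∀ v, pmOther N hN v = pmOther N' hN' v) → ∀ e ∈ N, e ∈ N' := by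
      intro N N' hN hN' hpo e he
      induction e using Sym2.ind with
      | _ a b =>
        rw [pm_edge_eq N hN he (Sym2.mem_mk_left a b), hpo a]
        exact pmOther_spec N' hN' a
    exact hne (Finset.Subset.antisymm (fun e he => key M₁ M₂ hM₁.2 hM₂.2 h e he)
      (fun e he => key M₂ M₁ hM₂.2 hM₁.2 (fun v => (h v).symm) e he))
  obtain ⟨v₀, hv₀⟩ := hv₀
  -- the alternating sequence
  let x : ℕ → V := fun n =>
    Nat.rec (motive := fun _ => V) v₀ (fun k xk => if Even k then g₁ xk else g₂ xk) n
  have hx0 : x 0 = v₀ := rfl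
  have hxs : ∀ n, x (n + 1) = if Even n then g₁ (x n) else g₂ (x n) := fun n => rfl
  have hxse : ∀ n, Even n → x (n + 1) = g₁ (x n) := fun n hn => by rw [hxs n, if_pos hn]
  have hxso : ∀ n, ¬ Even n → x (n + 1) = g₂ (x n) := fun n hn => by rw [hxs n, if_neg hn]
  have hbad : ∀ n, g₁ (x n) ≠ g₂ (x n) := by
    intro n
    induction n with
    | zero => exact hv₀
    | succ n ih =>
      by_cases hn : Even n
      · rw [hxse n hn]
        intro hEq
        have h1 : g₁ (g₁ (x n)) = x n := by rw [hg₁def, pmOther_invol]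
        have h2 : g₂ (g₁ (x n)) = x n := by rw [← hEq, h1]
        have h3 : s(g₁ (x n), g₂ (g₁ (x n))) ∈ M₂ := pmOther_spec M₂ hM₂.2 (g₁ (x n))
        rw [h2, Sym2.eq_swap] at h3
        exact ih (pmOther_unique M₂ hM₂.2 h3)
      · rw [hxso n hn]
        intro hEq
        have h1 : g₂ (g₂ (x n)) = x n := by rw [hg₂def, pmOther_invol]
        have h2 : g₁ (g₂ (x n)) = x n := by rw [hEq, h1]
        have h3 : s(g₂ (x n), g₁ (g₂ (x n))) ∈ M₁ := pmOther_spec M₁ hM₁.2 (g₂ (x n))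
        rw [h2, Sym2.eq_swap] at h3
        exact ih (pmOther_unique M₁ hM₁.2 h3).symm
  have hbacke : ∀ n, Even n → g₁ (x (n + 1)) = x n := by
    intro n hn; rw [hxse n hn, hg₁def, pmOther_invol]
  have hbacko : ∀ n, ¬ Even n → g₂ (x (n + 1)) = x n := by
    intro n hn; rw [hxso n hn, hg₂def, pmOther_invol]
  have hadj : ∀ n, G.Adj (x n) (x (n + 1)) := by
    intro n
    rw [← SimpleGraph.mem_edgeSet]
    by_cases hn : Even n
    · rw [hxse n hn]; exact hM₁.1 _ (pmOther_spec M₁ hM₁.2 (x n))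
    · rw [hxso n hn]; exact hM₂.1 _ (pmOther_spec M₂ hM₂.2 (x n))
  have hne1 : ∀ n, x (n + 1) ≠ x n := fun n => (hadj n).ne'
  have hne2 : ∀ n, x (n + 2) ≠ x n := by
    intro n h
    by_cases hn : Even n
    · have h1 : ¬ Even (n + 1) := by simp [Nat.even_add_one, hn]
      have h2 := hbacko (n + 1) h1
      rw [h, hxse n hn] at h2
      exact hbad n h2.symm
    · have h1 : Even (n + 1) := by simpa [Nat.even_add_one] using hn
      have h2 := hbacke (n + 1) h1
      rw [h, hxso n hn] at h2
      exact hbad n h2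
  -- minimal period d
  have hP : ∃ dd : ℕ, 0 < dd ∧ ∃ j, x (j + dd) = x j := by
    obtain ⟨a, b, hab, hxab⟩ := Finite.exists_ne_map_eq_of_infinite x
    rcases Nat.lt_or_ge a b with h | h
    · exact ⟨b - a, by omega, a, by rw [Nat.add_sub_cancel' h.le]; exact hxab.symm⟩
    · have h' : b < a := by omega
      exact ⟨a - b, by omega, b, by rw [Nat.add_sub_cancel' h'.le]; exact hxab⟩
  set d := Nat.find hP with hddef
  obtain ⟨hdpos, j₀, hj₀⟩ := Nat.find_spec hP
  rw [← hddef] at hdpos hj₀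
  have hmind : ∀ d' < d, ¬ (0 < d' ∧ ∃ j, x (j + d') = x j) := fun d' hd' => Nat.find_min hP hd'
  have heven : Even d := by
    by_contra hodd
    have hd1 : d ≠ 1 := by
      intro h1
      rw [h1] at hj₀
      exact hne1 j₀ hj₀
    obtain ⟨b, hb⟩ : Odd d := Nat.not_even_iff_odd.mp hodd
    have hd3 : 3 ≤ d := by omega
    by_cases hj : Even j₀
    · obtain ⟨a, ha⟩ := hj
      have hjd1 : Even (j₀ + d - 1) := ⟨a + b, by omega⟩
      have e1 := hbacke (j₀ + d - 1) hjd1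
      rw [show j₀ + d - 1 + 1 = j₀ + d by omega, hj₀, ← hxse j₀ ⟨a, ha⟩] at e1
      refine hmind (d - 2) (by omega) ⟨by omega, j₀ + 1, ?_⟩
      rw [show j₀ + 1 + (d - 2) = j₀ + d - 1 by omega]
      exact e1.symm
    · obtain ⟨a, ha⟩ : Odd j₀ := Nat.not_even_iff_odd.mp hj
      have hjd1 : ¬ Even (j₀ + d - 1) := by
        rw [Nat.not_even_iff_odd]
        exact ⟨a + b, by omega⟩
      have e1 := hbacko (j₀ + d - 1) hjd1
      rw [show j₀ + d - 1 + 1 = j₀ + d by omega, hj₀, ← hxso j₀ hj] at e1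
      refine hmind (d - 2) (by omega) ⟨by omega, j₀ + 1, ?_⟩
      rw [show j₀ + 1 + (d - 2) = j₀ + d - 1 by omega]
      exact e1.symm
  have hd4 : 4 ≤ d := by
    have hd2 : d ≠ 2 := by
      intro h2
      rw [h2] at hj₀
      exact hne2 j₀ hj₀
    obtain ⟨k, hk⟩ := heven
    omega
  have hperiod : ∀ j, x (j + d) = x j → x d = x 0 := by
    intro j
    induction j with
    | zero => intro h; simpa using h
    | succ j ih =>
      intro h
      apply ih
      rw [show j + 1 + d = j + d + 1 by omega] at h
      by_cases hj : Even j
      · have hjd : Even (j + d) := hj.add heven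
        have e1 := hbacke (j + d) hjd
        have e2 := hbacke j hj
        rw [h] at e1
        rw [← e1]
        exact e2
      · have hjd : ¬ Even (j + d) := by
          rw [Nat.even_add]
          simp [hj, heven]
        have e1 := hbacko (j + d) hjd
        have e2 := hbacko j hj
        rw [h] at e1
        rw [← e1]
        exact e2
  have hxd : x d = x 0 := hperiod j₀ hj₀
  have hinj : ∀ i < d, ∀ j < d, x i = x j → i = j := by
    intro i hi j hj hxij
    by_contra hne'
    rcases Nat.lt_or_ge i j with h | h
    · exact hmind (j - i) (by omega)
        ⟨by omega, i, by rw [show i + (j - i) = j by omega]; exact hxij.symm⟩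
    · exact hmind (i - j) (by omega)
        ⟨by omega, j, by rw [show j + (i - j) = i by omega]; exact hxij⟩
  -- build the closed walk
  let W : ∀ n, G.Walk (x 0) (x n) := fun n =>
    Nat.rec (motive := fun n => G.Walk (x 0) (x n)) SimpleGraph.Walk.nil
      (fun k p => p.concat (hadj k)) n
  have hWs : ∀ n, (W n).support = (List.range (n + 1)).map x := by
    intro n
    induction n with
    | zero => rfl
    | succ n ih =>
      show ((W n).concat (hadj n)).support = _
      rw [SimpleGraph.Walk.support_concat, ih]
      simp [List.range_succ]
  have hWe : ∀ n, (W n).edges = (List.range n).map (fun i => s(x i, x (i + 1))) := by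
    intro n
    induction n with
    | zero => rfl
    | succ n ih =>
      show ((W n).concat (hadj n)).edges = _
      rw [SimpleGraph.Walk.edges_concat, ih]
      simp [List.range_succ]
  let C : G.Walk (x 0) (x 0) := (W d).copy rfl hxd
  have hCs : C.support = (List.range (d + 1)).map x := by
    show ((W d).copy rfl hxd).support = _
    rw [SimpleGraph.Walk.support_copy, hWs]
  have hCe : C.edges = (List.range d).map (fun i => s(x i, x (i + 1))) := by
    show ((W d).copy rfl hxd).edges = _
    rw [SimpleGraph.Walk.edges_copy, hWe]
  have hmemsup : ∀ u : V, u ∈ C.support ↔ ∃ i, i < d ∧ x i = u := by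
    intro u
    rw [hCs, List.mem_map]
    constructor
    · rintro ⟨i, hi, rfl⟩
      rw [List.mem_range] at hi
      by_cases hid : i = d
      · exact ⟨0, by omega, by rw [hid, hxd]⟩
      · exact ⟨i, by omega, rfl⟩
    · rintro ⟨i, hi, rfl⟩
      exact ⟨i, List.mem_range.mpr (by omega), rfl⟩
  have hedgeinj : ∀ i < d, ∀ j < d, s(x i, x (i + 1)) = s(x j, x (j + 1)) → i = j := by
    intro i hi j hj h
    rw [Sym2.eq_iff] at h
    rcases h with ⟨h1, h2⟩ | ⟨h1, h2⟩
    · exact hinj i hi j hj h1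
    · rcases Nat.lt_or_ge (j + 1) d with hjd | hjd
      · have hij : i = j + 1 := hinj i hi (j + 1) hjd h1
        rcases Nat.lt_or_ge (i + 1) d with hid | hid
        · have := hinj (i + 1) hid j hj h2
          omega
        · have hi1 : i + 1 = d := by omega
          rw [hi1, hxd] at h2
          have := hinj 0 (by omega) j hj h2
          omega
      · have hj1 : j + 1 = d := by omega
        rw [hj1, hxd] at h1
        have hi0 : i = 0 := hinj i hi 0 (by omega) h1
        rcases Nat.lt_or_ge (i + 1) d with hid | hid
        · have := hinj (i + 1) hid j hj h2
          omega
        · omega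
  have hCcyc : C.IsCycle := by
    rw [SimpleGraph.Walk.isCycle_def]
    refine ⟨?_, ?_, ?_⟩
    · rw [SimpleGraph.Walk.isTrail_def, hCe]
      refine List.Nodup.map_on ?_ List.nodup_range
      intro i hi j hj hij
      exact hedgeinj i (List.mem_range.mp hi) j (List.mem_range.mp hj) hij
    · intro hnil
      have h := congrArg SimpleGraph.Walk.edges hnil
      rw [hCe] at h
      simp only [SimpleGraph.Walk.edges_nil, List.map_eq_nil_iff, List.range_eq_nil] at h
      omega
    · rw [hCs, List.range_succ_eq_map]
      simp only [List.map_cons, List.tail_cons, List.map_map]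
      refine List.Nodup.map_on ?_ List.nodup_range
      intro i hi j hj hij
      rw [List.mem_range] at hi hj
      simp only [Function.comp, Nat.succ_eq_add_one] at hij
      rcases Nat.lt_or_ge (i + 1) d with hid | hid
      · rcases Nat.lt_or_ge (j + 1) d with hjd | hjd
        · have := hinj (i + 1) hid (j + 1) hjd hij
          omega
        · have hj1 : j + 1 = d := by omega
          rw [hj1, hxd] at hij
          have := hinj (i + 1) hid 0 (by omega) hij
          omega
      · have hi1 : i + 1 = d := by omega
        rw [hi1, hxd] at hij
        rcases Nat.lt_or_ge (j + 1) d with hjd | hjd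
        · have := hinj 0 (by omega) (j + 1) hjd hij
          omega
        · omega
  have hxin : ∀ i ≤ d, x i ∈ C.support := by
    intro i hi
    rcases Nat.lt_or_ge i d with h | h
    · exact (hmemsup _).mpr ⟨i, h, rfl⟩
    · have hid : i = d := by omega
      rw [hid, hxd]
      exact (hmemsup _).mpr ⟨0, by omega, rfl⟩
  have hg₁x : ∀ i ≤ d, g₁ (x i) ∈ C.support := by
    intro i hi
    by_cases he : Even i
    · rcases Nat.lt_or_ge i d with h | h
      · rw [← hxse i he]
        exact hxin (i + 1) (by omega)
      · have hid : i = d := by omega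
        rw [hid, hxd, ← hxse 0 (by simp)]
        exact hxin 1 (by omega)
    · obtain ⟨a, ha⟩ := Nat.not_even_iff_odd.mp he
      have h0 : Even (i - 1) := ⟨a, by omega⟩
      have hb := hbacke (i - 1) h0
      rw [show i - 1 + 1 = i by omega] at hb
      rw [hb]
      exact hxin (i - 1) (by omega)
  have hg₂x : ∀ i ≤ d, g₂ (x i) ∈ C.support := by
    intro i hi
    by_cases he : Even i
    · rcases Nat.eq_zero_or_pos i with h0 | h0
      · have hodd : ¬ Even (d - 1) := by
          obtain ⟨k, hk⟩ := heven
          rw [Nat.not_even_iff_odd]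
          exact ⟨k - 1, by omega⟩
        have hb := hbacko (d - 1) hodd
        rw [show d - 1 + 1 = d by omega, hxd] at hb
        rw [h0, hb]
        exact hxin (d - 1) (by omega)
      · have hodd : ¬ Even (i - 1) := by
          obtain ⟨a, ha⟩ := he
          rw [Nat.not_even_iff_odd]
          exact ⟨a - 1, by omega⟩
        have hb := hbacko (i - 1) hodd
        rw [show i - 1 + 1 = i by omega] at hb
        rw [hb]
        exact hxin (i - 1) (by omega)
    · have hlt : i < d := by
        rcases Nat.lt_or_ge i d with h | h
        · exact h
        · exact absurd (by rw [show i = d by omega]; exact heven) he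
      rw [← hxso i he]
      exact hxin (i + 1) (by omega)
  have hnice : IsNiceCycle G C := by
    refine ⟨M₁.filter (fun e => ∀ u ∈ e, u ∉ C.support), ?_, ?_, ?_⟩
    · intro e he
      exact hM₁.1 e (Finset.mem_filter.mp he).1
    · intro e he u hu
      exact (Finset.mem_filter.mp he).2 u hu
    · intro u hu
      refine ⟨s(u, g₁ u),
        ⟨Finset.mem_filter.mpr ⟨pmOther_spec M₁ hM₁.2 u, ?_⟩, Sym2.mem_mk_left _ _⟩, ?_⟩
      · intro z hz
        rw [Sym2.mem_iff] at hz
        rcases hz with rfl | rfl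
        · exact hu
        · intro hz'
          rw [hmemsup] at hz'
          obtain ⟨i, hi, hxi⟩ := hz'
          apply hu
          have hux : g₁ (x i) = u := by rw [hxi, hg₁def, pmOther_invol]
          rw [← hux]
          exact hg₁x i (by omega)
      · rintro e ⟨hef, hue⟩
        exact pm_edge_eq M₁ hM₁.2 (Finset.mem_filter.mp hef).1 hue
  -- the alternating edge sets along the cycle
  let ed : ℕ → Sym2 V := fun i => s(x i, x (i + 1))
  let A : Finset (Sym2 V) := ((Finset.range d).filter (fun i => Even i)).image ed
  let B : Finset (Sym2 V) := ((Finset.range d).filter (fun i => ¬ Even i)).image ed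
  have hmemA : ∀ e, e ∈ A ↔ ∃ i, i < d ∧ Even i ∧ ed i = e := by
    intro e
    show e ∈ ((Finset.range d).filter (fun i => Even i)).image ed ↔ _
    rw [Finset.mem_image]
    constructor
    · rintro ⟨i, hi, rfl⟩
      rw [Finset.mem_filter, Finset.mem_range] at hi
      exact ⟨i, hi.1, hi.2, rfl⟩
    · rintro ⟨i, hi, hev, rfl⟩
      exact ⟨i, Finset.mem_filter.mpr ⟨Finset.mem_range.mpr hi, hev⟩, rfl⟩
  have hmemB : ∀ e, e ∈ B ↔ ∃ i, i < d ∧ ¬ Even i ∧ ed i = e := by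
    intro e
    show e ∈ ((Finset.range d).filter (fun i => ¬ Even i)).image ed ↔ _
    rw [Finset.mem_image]
    constructor
    · rintro ⟨i, hi, rfl⟩
      rw [Finset.mem_filter, Finset.mem_range] at hi
      exact ⟨i, hi.1, hi.2, rfl⟩
    · rintro ⟨i, hi, hev, rfl⟩
      exact ⟨i, Finset.mem_filter.mpr ⟨Finset.mem_range.mpr hi, hev⟩, rfl⟩
  have hAsub : A ⊆ M₁ := by
    intro e he
    rw [hmemA] at he
    obtain ⟨i, hi, hev, rfl⟩ := he
    show s(x i, x (i + 1)) ∈ M₁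
    rw [hxse i hev]
    exact pmOther_spec M₁ hM₁.2 (x i)
  have hBsub : B ⊆ M₂ := by
    intro e he
    rw [hmemB] at he
    obtain ⟨i, hi, hev, rfl⟩ := he
    show s(x i, x (i + 1)) ∈ M₂
    rw [hxso i hev]
    exact pmOther_spec M₂ hM₂.2 (x i)
  have hg₁odd : ∀ i, ¬ Even i → g₁ (x i) = x (i - 1) := by
    intro i hi
    obtain ⟨a, ha⟩ := Nat.not_even_iff_odd.mp hi
    have h0 : Even (i - 1) := ⟨a, by omega⟩
    have hb := hbacke (i - 1) h0
    rw [show i - 1 + 1 = i by omega] at hb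
    exact hb
  have hg₂even : ∀ i, 0 < i → Even i → g₂ (x i) = x (i - 1) := by
    intro i h0 hi
    obtain ⟨a, ha⟩ := hi
    have ho : ¬ Even (i - 1) := by
      rw [Nat.not_even_iff_odd]
      exact ⟨a - 1, by omega⟩
    have hb := hbacko (i - 1) ho
    rw [show i - 1 + 1 = i by omega] at hb
    exact hb
  have hg₂zero : g₂ (x 0) = x (d - 1) := by
    have ho : ¬ Even (d - 1) := by
      obtain ⟨k, hk⟩ := heven
      rw [Nat.not_even_iff_odd]
      exact ⟨k - 1, by omega⟩
    have hb := hbacko (d - 1) ho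
    rw [show d - 1 + 1 = d by omega, hxd] at hb
    exact hb
  have hBM₁ : ∀ e ∈ B, e ∉ M₁ := by
    intro e he hem
    rw [hmemB] at he
    obtain ⟨j, hj, hodd, rfl⟩ := he
    have h1 : x (j + 1) = g₁ (x j) := pmOther_unique M₁ hM₁.2 hem
    rw [hg₁odd j hodd] at h1
    obtain ⟨a, ha⟩ := Nat.not_even_iff_odd.mp hodd
    rcases Nat.lt_or_ge (j + 1) d with h | h
    · have := hinj (j + 1) h (j - 1) (by omega) h1
      omega
    · have hj1 : j + 1 = d := by omega
      rw [hj1, hxd] at h1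
      have := hinj 0 (by omega) (j - 1) (by omega) h1
      omega
  have hAM₂ : ∀ e ∈ A, e ∉ M₂ := by
    intro e he hem
    rw [hmemA] at he
    obtain ⟨i, hi, hev, rfl⟩ := he
    have h1 : x (i + 1) = g₂ (x i) := pmOther_unique M₂ hM₂.2 hem
    rcases Nat.eq_zero_or_pos i with h0 | h0
    · subst h0
      rw [hg₂zero] at h1
      have := hinj (0 + 1) (by omega) (d - 1) (by omega) h1
      omega
    · rw [hg₂even i h0 hev] at h1
      obtain ⟨k, hk⟩ := heven
      obtain ⟨a, ha⟩ := hev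
      have := hinj (i + 1) (by omega) (i - 1) (by omega) h1
      omega
  have hsumA : ∑ e ∈ A, w e = ∑ i ∈ (Finset.range d).filter (fun i => Even i), w (ed i) :=
    Finset.sum_image (by
      intro i hi j hj hij
      rw [Finset.mem_coe, Finset.mem_filter, Finset.mem_range] at hi hj
      exact hedgeinj i hi.1 j hj.1 hij)
  have hsumB : ∑ e ∈ B, w e = ∑ i ∈ (Finset.range d).filter (fun i => ¬ Even i), w (ed i) :=
    Finset.sum_image (by
      intro i hi j hj hij
      rw [Finset.mem_coe, Finset.mem_filter, Finset.mem_range] at hi hj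
      exact hedgeinj i hi.1 j hj.1 hij)
  have hedsup : ∀ i < d, ∀ u ∈ ed i, u ∈ C.support := by
    intro i hi u hu
    have hu' : u = x i ∨ u = x (i + 1) := Sym2.mem_iff.mp hu
    rcases hu' with rfl | rfl
    · exact hxin i (by omega)
    · exact hxin (i + 1) (by omega)
  have hAsup : ∀ e ∈ A, ∀ u ∈ e, u ∈ C.support := by
    intro e he
    rw [hmemA] at he
    obtain ⟨i, hi, _, rfl⟩ := he
    exact hedsup i hi
  have hBsup : ∀ e ∈ B, ∀ u ∈ e, u ∈ C.support := by
    intro e he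
    rw [hmemB] at he
    obtain ⟨i, hi, _, rfl⟩ := he
    exact hedsup i hi
  have hAE : ∀ e ∈ A, e ∈ G.edgeSet := fun e he => hM₁.1 e (hAsub he)
  have hBE : ∀ e ∈ B, e ∈ G.edgeSet := fun e he => hM₂.1 e (hBsub he)
  have hmemed : ∀ i < d, ∀ j < d, x i ∈ ed j →
      i = j ∨ (j + 1 < d ∧ i = j + 1) ∨ (j + 1 = d ∧ i = 0) := by
    intro i hi j hj hmem
    have h : x i = x j ∨ x i = x (j + 1) := Sym2.mem_iff.mp hmem
    rcases h with h | h
    · exact Or.inl (hinj i hi j hj h)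
    · rcases Nat.lt_or_ge (j + 1) d with h' | h'
      · exact Or.inr (Or.inl ⟨h', hinj i hi (j + 1) h' h⟩)
      · have hj1 : j + 1 = d := by omega
        rw [hj1, hxd] at h
        exact Or.inr (Or.inr ⟨hj1, hinj i hi 0 (by omega) h⟩)
  -- the M₁-edge at any cycle vertex lies in A
  have hNS₁ : ∀ u ∈ C.support, ∀ e ∈ M₁, u ∈ e → e ∈ A := by
    intro u hu e heM hue
    rw [hmemsup] at hu
    obtain ⟨i, hi, rfl⟩ := hu
    have hee : e = s(x i, g₁ (x i)) := pm_edge_eq M₁ hM₁.2 heM hue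
    by_cases hev : Even i
    · rw [hmemA]
      refine ⟨i, hi, hev, ?_⟩
      show s(x i, x (i + 1)) = e
      rw [hee, hxse i hev]
    · rw [hg₁odd i hev] at hee
      obtain ⟨a, ha⟩ := Nat.not_even_iff_odd.mp hev
      rw [hmemA]
      refine ⟨i - 1, by omega, ⟨a, by omega⟩, ?_⟩
      show s(x (i - 1), x (i - 1 + 1)) = e
      rw [show i - 1 + 1 = i by omega, hee, Sym2.eq_swap]
  have hNS₂ : ∀ u ∈ C.support, ∀ e ∈ M₂, u ∈ e → e ∈ B := by
    intro u hu e heM hue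
    rw [hmemsup] at hu
    obtain ⟨i, hi, rfl⟩ := hu
    have hee : e = s(x i, g₂ (x i)) := pm_edge_eq M₂ hM₂.2 heM hue
    by_cases hev : Even i
    · rcases Nat.eq_zero_or_pos i with h0 | h0
      · subst h0
        rw [hg₂zero] at hee
        obtain ⟨k, hk⟩ := heven
        rw [hmemB]
        refine ⟨d - 1, by omega, ?_, ?_⟩
        · rw [Nat.not_even_iff_odd]
          exact ⟨k - 1, by omega⟩
        · show s(x (d - 1), x (d - 1 + 1)) = e
          rw [show d - 1 + 1 = d by omega, hxd, hee, Sym2.eq_swap]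
      · rw [hg₂even i h0 hev] at hee
        obtain ⟨a, ha⟩ := hev
        rw [hmemB]
        refine ⟨i - 1, by omega, ?_, ?_⟩
        · rw [Nat.not_even_iff_odd]
          exact ⟨a - 1, by omega⟩
        · show s(x (i - 1), x (i - 1 + 1)) = e
          rw [show i - 1 + 1 = i by omega, hee, Sym2.eq_swap]
    · rw [hmemB]
      refine ⟨i, hi, hev, ?_⟩
      show s(x i, x (i + 1)) = e
      rw [hee, hxso i hev]
  -- B perfectly matches the cycle vertices
  have hTmB : ∀ u ∈ C.support, ∃! e, e ∈ B ∧ u ∈ e := by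
    intro u hu
    rw [hmemsup] at hu
    obtain ⟨i, hi, rfl⟩ := hu
    by_cases hev : Even i
    · obtain ⟨k, hk⟩ := heven
      obtain ⟨a, ha⟩ := hev
      rcases Nat.eq_zero_or_pos i with h0 | h0
      · subst h0
        refine ⟨ed (d - 1), ⟨?_, ?_⟩, ?_⟩
        · rw [hmemB]
          exact ⟨d - 1, by omega, by rw [Nat.not_even_iff_odd]; exact ⟨k - 1, by omega⟩, rfl⟩
        · show x 0 ∈ s(x (d - 1), x (d - 1 + 1))
          rw [show d - 1 + 1 = d by omega, hxd]
          exact Sym2.mem_mk_right _ _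
        · rintro e' ⟨he', hue'⟩
          rw [hmemB] at he'
          obtain ⟨j, hj, hjodd, rfl⟩ := he'
          obtain ⟨b, hb⟩ := Nat.not_even_iff_odd.mp hjodd
          rcases hmemed 0 (by omega) j hj hue' with h | ⟨h1, h2⟩ | ⟨h1, h2⟩
          · omega
          · omega
          · congr 1
            omega
      · refine ⟨ed (i - 1), ⟨?_, ?_⟩, ?_⟩
        · rw [hmemB]
          exact ⟨i - 1, by omega, by rw [Nat.not_even_iff_odd]; exact ⟨a - 1, by omega⟩, rfl⟩
        · show x i ∈ s(x (i - 1), x (i - 1 + 1))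
          rw [show i - 1 + 1 = i by omega]
          exact Sym2.mem_mk_right _ _
        · rintro e' ⟨he', hue'⟩
          rw [hmemB] at he'
          obtain ⟨j, hj, hjodd, rfl⟩ := he'
          obtain ⟨b, hb⟩ := Nat.not_even_iff_odd.mp hjodd
          rcases hmemed i hi j hj hue' with h | ⟨h1, h2⟩ | ⟨h1, h2⟩
          · omega
          · congr 1
            omega
          · omega
    · obtain ⟨a, ha⟩ := Nat.not_even_iff_odd.mp hev
      refine ⟨ed i, ⟨?_, ?_⟩, ?_⟩
      · rw [hmemB]
        exact ⟨i, hi, hev, rfl⟩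
      · exact Sym2.mem_mk_left _ _
      · rintro e' ⟨he', hue'⟩
        rw [hmemB] at he'
        obtain ⟨j, hj, hjodd, rfl⟩ := he'
        obtain ⟨b, hb⟩ := Nat.not_even_iff_odd.mp hjodd
        rcases hmemed i hi j hj hue' with h | ⟨h1, h2⟩ | ⟨h1, h2⟩
        · congr 1
          omega
        · omega
        · omega
  -- A perfectly matches the cycle vertices
  have hTmA : ∀ u ∈ C.support, ∃! e, e ∈ A ∧ u ∈ e := by
    intro u hu
    rw [hmemsup] at hu
    obtain ⟨i, hi, rfl⟩ := hu
    obtain ⟨k, hk⟩ := heven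
    by_cases hev : Even i
    · obtain ⟨a, ha⟩ := hev
      refine ⟨ed i, ⟨?_, ?_⟩, ?_⟩
      · rw [hmemA]
        exact ⟨i, hi, ⟨a, ha⟩, rfl⟩
      · exact Sym2.mem_mk_left _ _
      · rintro e' ⟨he', hue'⟩
        rw [hmemA] at he'
        obtain ⟨j, hj, hjev, rfl⟩ := he'
        obtain ⟨b, hb⟩ := hjev
        rcases hmemed i hi j hj hue' with h | ⟨h1, h2⟩ | ⟨h1, h2⟩
        · congr 1
          omega
        · omega
        · omega
    · obtain ⟨a, ha⟩ := Nat.not_even_iff_odd.mp hev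
      refine ⟨ed (i - 1), ⟨?_, ?_⟩, ?_⟩
      · rw [hmemA]
        exact ⟨i - 1, by omega, ⟨a, by omega⟩, rfl⟩
      · show x i ∈ s(x (i - 1), x (i - 1 + 1))
        rw [show i - 1 + 1 = i by omega]
        exact Sym2.mem_mk_right _ _
      · rintro e' ⟨he', hue'⟩
        rw [hmemA] at he'
        obtain ⟨j, hj, hjev, rfl⟩ := he'
        obtain ⟨b, hb⟩ := hjev
        rcases hmemed i hi j hj hue' with h | ⟨h1, h2⟩ | ⟨h1, h2⟩
        · omega
        · congr 1
          omega
        · omega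
  -- the generic swap construction
  have pmswap : ∀ (N : Finset (Sym2 V)), IsPerfectMatching G N →
      ∀ (S T : Finset (Sym2 V)), S ⊆ N → (∀ e ∈ T, e ∈ G.edgeSet) →
      (∀ e ∈ S, ∀ u ∈ e, u ∈ C.support) →
      (∀ e ∈ T, ∀ u ∈ e, u ∈ C.support) →
      (∀ u ∈ C.support, ∀ e ∈ N, u ∈ e → e ∈ S) →
      (∀ u ∈ C.support, ∃! e, e ∈ T ∧ u ∈ e) →
      IsPerfectMatching G ((N \ S) ∪ T) := by
    intro N hN S T hSN hTE hSsup hTsup hNS hTm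
    constructor
    · intro e he
      rcases Finset.mem_union.mp he with h | h
      · exact hN.1 e (Finset.mem_sdiff.mp h).1
      · exact hTE e h
    · intro v
      by_cases hv : v ∈ C.support
      · obtain ⟨e, ⟨heT, hve⟩, huniq⟩ := hTm v hv
        refine ⟨e, ⟨Finset.mem_union_right _ heT, hve⟩, ?_⟩
        rintro e' ⟨he', hve'⟩
        rcases Finset.mem_union.mp he' with h | h
        · exact absurd (hNS v hv e' (Finset.mem_sdiff.mp h).1 hve')
            (Finset.mem_sdiff.mp h).2
        · exact huniq e' ⟨h, hve'⟩
      · obtain ⟨e, ⟨heN, hve⟩, huniq⟩ := hN.2 v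
        have heS : e ∉ S := fun heS => hv (hSsup e heS v hve)
        refine ⟨e, ⟨Finset.mem_union_left _ (Finset.mem_sdiff.mpr ⟨heN, heS⟩), hve⟩, ?_⟩
        rintro e' ⟨he', hve'⟩
        rcases Finset.mem_union.mp he' with h | h
        · exact huniq e' ⟨(Finset.mem_sdiff.mp h).1, hve'⟩
        · exact absurd (hTsup e' h v hve') hv
  have hpm₁' : IsPerfectMatching G ((M₁ \ A) ∪ B) :=
    pmswap M₁ hM₁ A B hAsub hBE hAsup hBsup hNS₁ hTmB
  have hpm₂' : IsPerfectMatching G ((M₂ \ B) ∪ A) :=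
    pmswap M₂ hM₂ B A hBsub hAE hBsup hAsup hNS₂ hTmA
  -- weights of the swapped matchings
  have hw : ∀ (N S T : Finset (Sym2 V)), S ⊆ N → (∀ e ∈ T, e ∉ N) →
      matchWeight w ((N \ S) ∪ T) = matchWeight w N - ∑ e ∈ S, w e + ∑ e ∈ T, w e := by
    intro N S T hSN hTN
    have hdisj : Disjoint (N \ S) T := by
      rw [Finset.disjoint_right]
      intro e heT heNS
      exact hTN e heT (Finset.mem_sdiff.mp heNS).1
    have hsd := Finset.sum_sdiff hSN (f := w)
    show ∑ e ∈ (N \ S) ∪ T, w e = (∑ e ∈ N, w e) - ∑ e ∈ S, w e + ∑ e ∈ T, w e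
    rw [Finset.sum_union hdisj]
    linarith
  have hle₁ := hmin₁ _ hpm₁'
  rw [hw M₁ A B hAsub hBM₁] at hle₁
  have hle₂ := hmin₂ _ hpm₂'
  rw [hw M₂ B A hBsub hAM₂] at hle₂
  have hAB : ∑ e ∈ A, w e = ∑ e ∈ B, w e := by linarith
  -- circulation of the cycle is zero: contradiction
  have hkey : ∑ i ∈ Finset.range d, (-1 : ℤ) ^ i * w (ed i) = 0 := by
    rw [← Finset.sum_filter_add_sum_filter_not (Finset.range d) (fun i => Even i)]
    have hEv : ∑ i ∈ (Finset.range d).filter (fun i => Even i), (-1 : ℤ) ^ i * w (ed i)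
        = ∑ e ∈ A, w e := by
      rw [hsumA]
      refine Finset.sum_congr rfl fun i hi => ?_
      rw [Even.neg_one_pow (Finset.mem_filter.mp hi).2, one_mul]
    have hOd : ∑ i ∈ (Finset.range d).filter (fun i => ¬ Even i), (-1 : ℤ) ^ i * w (ed i)
        = - ∑ e ∈ B, w e := by
      rw [hsumB, ← Finset.sum_neg_distrib]
      refine Finset.sum_congr rfl fun i hi => ?_
      rw [Odd.neg_one_pow (Nat.not_even_iff_odd.mp (Finset.mem_filter.mp hi).2), neg_one_mul]
    rw [hEv, hOd, hAB]
    ring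
  apply hcirc (x 0) C hCcyc hnice
  rw [circulation, hCe, List.map_map, altSum_range]
  simp only [Function.comp]
  rw [show (∑ i ∈ Finset.range d, (-1 : ℤ) ^ i * w s(x i, x (i + 1))) = 0 from hkey, abs_zero]
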